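/- Let P be a cyclic normal Sylow p-subgroup of a finite group G with P central in G. Then Ω_ρ(G/P) = (Ω_ρ(G)·|P| − Ω_ρ(P)·|G|) / |P|². -/
import Mathlib

open ArithmeticFunction Finset

noncomputable def rho (G : Type*) [Group G] : ℕ := ∏ᶠ x : G, orderOf x

noncomputable def OmegaRho (G : Type*) [Group G] : ℕ :=
  ArithmeticFunction.cardFactors (rho G)

lemma rho_congr {G H : Type*} [Group G] [Group H] (e : G ≃* H) : rho G = rho H :=
  finprod_eq_of_bijective e e.bijective fun x =>
    (orderOf_injective e.toMonoidHom e.injective x).symm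

lemma OmegaRho_congr {G H : Type*} [Group G] [Group H] (e : G ≃* H) :
    OmegaRho G = OmegaRho H := by unfold OmegaRho; rw [rho_congr e]

lemma cardFactors_finset_prod {α : Type*} (s : Finset α) (f : α → ℕ)
    (h : ∀ i ∈ s, f i ≠ 0) :
    ArithmeticFunction.cardFactors (∏ i ∈ s, f i) = ∑ i ∈ s, ArithmeticFunction.cardFactors (f i) := by
  classical
  induction s using Finset.cons_induction with
  | empty => simp
  | cons a s hx ih =>
    rw [Finset.prod_cons, Finset.sum_cons,
      ArithmeticFunction.cardFactors_mul (h a (mem_cons_self a s))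
        (Finset.prod_ne_zero_iff.2 fun i hi => h i (mem_cons_of_mem hi)),
      ih fun i hi => h i (mem_cons_of_mem hi)]

lemma OmegaRho_eq_sum (G : Type*) [Group G] [Fintype G] :
    OmegaRho G = ∑ x : G, ArithmeticFunction.cardFactors (orderOf x) := by
  rw [OmegaRho, rho, finprod_eq_prod_of_fintype]
  exact cardFactors_finset_prod _ _ fun i _ => (orderOf_pos i).ne'

lemma OmegaRho_prod (A B : Type*) [Group A] [Group B] [Fintype A] [Fintype B]
    (hco : Nat.Coprime (Nat.card A) (Nat.card B)) :
    OmegaRho (A × B) = Nat.card B * OmegaRho A + Nat.card A * OmegaRho B := by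
  rw [OmegaRho_eq_sum, OmegaRho_eq_sum, OmegaRho_eq_sum, Fintype.sum_prod_type]
  have key : ∀ (a : A) (b : B),
      ArithmeticFunction.cardFactors (orderOf ((a, b) : A × B)) =
        ArithmeticFunction.cardFactors (orderOf a) +
          ArithmeticFunction.cardFactors (orderOf b) := by
    intro a b
    have hc : Nat.Coprime (orderOf a) (orderOf b) :=
      Nat.Coprime.coprime_dvd_left (orderOf_dvd_natCard a)
        (Nat.Coprime.coprime_dvd_right (orderOf_dvd_natCard b) hco)
    rw [Prod.orderOf, Nat.Coprime.lcm_eq_mul hc,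
      ArithmeticFunction.cardFactors_mul (orderOf_pos a).ne' (orderOf_pos b).ne']
  simp only [key, Finset.sum_add_distrib, Finset.sum_const, Finset.card_univ, smul_eq_mul]
  rw [Nat.card_eq_fintype_card, Nat.card_eq_fintype_card, ← Finset.mul_sum]

theorem omegaRho_quotient_central (G : Type*) [Group G] [Finite G] (p : ℕ) [Fact p.Prime]
    (P : Sylow p G) [(P : Subgroup G).Normal] (hcyc : IsCyclic (P : Subgroup G))
    (hcen : (P : Subgroup G) ≤ Subgroup.center G) :
    OmegaRho (G ⧸ (P : Subgroup G)) =
      (OmegaRho G * Nat.card (P : Subgroup G) - OmegaRho (P : Subgroup G) * Nat.card G) /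
        (Nat.card (P : Subgroup G)) ^ 2 := by
  classical
  obtain ⟨H, hH⟩ :=
    Subgroup.exists_right_complement'_of_coprime (N := (P : Subgroup G)) P.card_coprime_index
  -- the multiplication hom (P × H) →* G
  have hcomm : ∀ (a : (P : Subgroup G)) (b : H), Commute ((a : G)) ((b : G)) := fun a b =>
    ((Subgroup.mem_center_iff.1 (hcen a.2)) (b : G)).symm
  let φ : (↥(P : Subgroup G) × ↥H) →* G :=
    MonoidHom.noncommCoprod (P : Subgroup G).subtype H.subtype hcomm
  have hφ : Function.Bijective φ := hH
  let e1 : (↥(P : Subgroup G) × ↥H) ≃* G := MulEquiv.ofBijective φ hφ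
  -- the iso H ≃* G ⧸ P
  let ψ : H →* G ⧸ (P : Subgroup G) :=
    (QuotientGroup.mk' (P : Subgroup G)).comp H.subtype
  have hψinj : Function.Injective ψ := by
    rw [← MonoidHom.ker_eq_bot_iff, eq_bot_iff]
    intro b hb
    have hbP : (b : G) ∈ (P : Subgroup G) := by
      simpa [ψ, QuotientGroup.eq_one_iff] using hb
    have : (b : G) ∈ (P : Subgroup G) ⊓ H := ⟨hbP, b.2⟩
    rw [hH.disjoint.eq_bot] at this
    simpa [Subgroup.mem_bot] using this
  have hψsurj : Function.Surjective ψ := by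
    intro g
    obtain ⟨x, rfl⟩ := QuotientGroup.mk_surjective g
    obtain ⟨⟨a, b⟩, hab⟩ := hφ.2 x
    refine ⟨b, ?_⟩
    have : (a : G) * (b : G) = x := hab
    simp only [ψ, MonoidHom.comp_apply, QuotientGroup.mk'_apply, Subgroup.coe_subtype]
    rw [← this, QuotientGroup.mk_mul,
      show (((a : G) : G ⧸ (P : Subgroup G))) = 1 from (QuotientGroup.eq_one_iff _).2 a.2,
      one_mul]
  let e2 : H ≃* G ⧸ (P : Subgroup G) := MulEquiv.ofBijective ψ ⟨hψinj, hψsurj⟩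
  haveI : Fintype ((P : Subgroup G)) := Fintype.ofFinite _
  haveI : Fintype H := Fintype.ofFinite _
  have hcardG : Nat.card (P : Subgroup G) * Nat.card H = Nat.card G := hH.card_mul
  have hidx : (P : Subgroup G).index = Nat.card H := by
    have h2 := Subgroup.card_mul_index (P : Subgroup G)
    have hkpos : 0 < Nat.card (P : Subgroup G) := Nat.card_pos
    exact Nat.eq_of_mul_eq_mul_left hkpos (h2.trans hcardG.symm)
  have hco : Nat.Coprime (Nat.card (P : Subgroup G)) (Nat.card H) := by
    have := P.card_coprime_index
    rwa [hidx] at this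
  have hG : OmegaRho G =
      Nat.card H * OmegaRho (P : Subgroup G) + Nat.card (P : Subgroup G) * OmegaRho H := by
    rw [← OmegaRho_congr e1, OmegaRho_prod _ _ hco]
  have hQ : OmegaRho (G ⧸ (P : Subgroup G)) = OmegaRho H := (OmegaRho_congr e2).symm
  set k := Nat.card (P : Subgroup G) with hk
  set m := Nat.card H with hm
  have hkpos : 0 < k := Nat.card_pos
  rw [hQ, hG, ← hcardG]
  have h1 : (m * OmegaRho (P : Subgroup G) + k * OmegaRho H) * k -
      OmegaRho (P : Subgroup G) * (k * m) = OmegaRho H * k ^ 2 := by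
    have : (m * OmegaRho (P : Subgroup G) + k * OmegaRho H) * k =
        OmegaRho H * k ^ 2 + OmegaRho (P : Subgroup G) * (k * m) := by ring
    omega
  rw [h1, Nat.mul_div_cancel _ (by positivity)]
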